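/- Every dicotic (all-small) game G is infinitesimal: for every positive integer n, the sum of n copies of G is strictly less than 1 and strictly greater than −1. -/

import Mathlib

universe u

namespace SetTheory

/-- Pre-games, as formerly in Mathlib (`SetTheory.PGame`, removed from Mathlib since). -/
inductive PGame : Type (u + 1)
  | mk : ∀ α β : Type u, (α → PGame) → (β → PGame) → PGame

namespace PGame

def LeftMoves : PGame → Type u
  | mk l _ _ _ => l

def RightMoves : PGame → Type u
  | mk _ r _ _ => r

def moveLeft : ∀ g : PGame, LeftMoves g → PGame
  | mk _l _r L _ => L

def moveRight : ∀ g : PGame, RightMoves g → PGame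
  | mk _ _r _ R => R

/-- `x` is an immediate option of `y`. -/
def IsOption' (x y : PGame.{u}) : Prop :=
  (∃ i, y.moveLeft i = x) ∨ ∃ j, y.moveRight j = x

theorem isOption'_wf : WellFounded IsOption'.{u} := by
  constructor
  intro x
  induction x with
  | mk l r L R IHl IHr =>
    constructor
    rintro y (⟨i, rfl⟩ | ⟨j, rfl⟩)
    · exact IHl i
    · exact IHr j

instance : WellFoundedRelation PGame.{u} := ⟨IsOption', isOption'_wf⟩

theorem isOption'_moveLeft (x : PGame.{u}) (i : x.LeftMoves) : IsOption' (x.moveLeft i) x :=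
  Or.inl ⟨i, rfl⟩

theorem isOption'_moveRight (x : PGame.{u}) (j : x.RightMoves) : IsOption' (x.moveRight j) x :=
  Or.inr ⟨j, rfl⟩

instance : Zero PGame.{u} := ⟨⟨PEmpty, PEmpty, PEmpty.elim, PEmpty.elim⟩⟩

instance : One PGame.{u} := ⟨⟨PUnit, PEmpty, fun _ => 0, PEmpty.elim⟩⟩

def star : PGame.{u} := ⟨PUnit, PUnit, fun _ => 0, fun _ => 0⟩

def ofLists (L R : List PGame.{u}) : PGame.{u} :=
  mk (ULift (Fin L.length)) (ULift (Fin R.length)) (fun i => L[i.down.1]) fun j => R[j.down.1]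

def neg : PGame.{u} → PGame.{u}
  | ⟨l, r, L, R⟩ => ⟨r, l, fun i => neg (R i), fun i => neg (L i)⟩

instance : Neg PGame.{u} := ⟨neg⟩

noncomputable def add (x : PGame.{u}) : PGame.{u} → PGame.{u} :=
  PGame.rec (motive := fun _ => PGame.{u} → PGame.{u})
    (fun xl xr _ _ IHxl IHxr y =>
      PGame.rec (motive := fun _ => PGame.{u})
        (fun yl yr yL yR IHyl IHyr =>
          mk (xl ⊕ yl) (xr ⊕ yr)
            (Sum.rec (fun i => IHxl i (mk yl yr yL yR)) IHyl)
            (Sum.rec (fun i => IHxr i (mk yl yr yL yR)) IHyr)) y) x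

noncomputable instance : Add PGame.{u} := ⟨add⟩

/-- The pair (`x ≤ y`, `x ⧏ y`), by the same recursion as in former Mathlib. -/
noncomputable def leLF (x : PGame.{u}) : PGame.{u} → Prop × Prop :=
  PGame.rec (motive := fun _ => PGame.{u} → Prop × Prop)
    (fun xl xr _ _ IHxl IHxr y =>
      PGame.rec (motive := fun _ => Prop × Prop)
        (fun yl yr yL yR IHyl IHyr =>
          ((∀ i, (IHxl i (mk yl yr yL yR)).2) ∧ ∀ j, (IHyr j).2,
           (∃ i, (IHyl i).1) ∨ ∃ j, (IHxr j (mk yl yr yL yR)).1)) y) x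

instance : LE PGame.{u} := ⟨fun x y => (leLF x y).1⟩

/-- As in former Mathlib's `Preorder PGame`: `x < y ↔ x ≤ y ∧ ¬ y ≤ x`. -/
instance : LT PGame.{u} := ⟨fun x y => x ≤ y ∧ ¬ y ≤ x⟩

end PGame

end SetTheory

open SetTheory PGame
open scoped PGame

/-- The game up, ↑ = {0 | *}. -/
def upG : PGame := ofLists [0] [star]

/-- The game down, ↓ = {* | 0}. -/
def downG : PGame := ofLists [star] [0]

/-- `copies n G` is the disjunctive sum of `n` copies of `G`. -/
noncomputable def copies : ℕ → PGame → PGame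
  | 0, _ => 0
  | n + 1, G => copies n G + G

/-- A game is dicotic (all-small) if either it has no options for either player, or
both players have at least one option and every option is dicotic. -/
def Dicotic (G : PGame) : Prop :=
  (IsEmpty G.LeftMoves ∧ IsEmpty G.RightMoves ∨
    Nonempty G.LeftMoves ∧ Nonempty G.RightMoves) ∧
    (∀ i, Dicotic (G.moveLeft i)) ∧ ∀ j, Dicotic (G.moveRight j)
termination_by G
decreasing_by
  all_goals first
    | exact isOption'_moveLeft _ _
    | exact isOption'_moveRight _ _

/-- The dicotic transformation δ: every empty option set is replaced by the single option 0. -/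
def delta : PGame → PGame
  | PGame.mk l r L R =>
    PGame.mk (l ⊕ PLift (IsEmpty l)) (r ⊕ PLift (IsEmpty r))
      (Sum.rec (fun i => delta (L i)) fun _ => 0)
      (Sum.rec (fun j => delta (R j)) fun _ => 0)

/-- A game is infinitesimal if every positive multiple lies strictly between -1 and 1. -/
def Infinitesimal (G : PGame) : Prop :=
  ∀ n : ℕ, 0 < n → copies n G < 1 ∧ -1 < copies n G

namespace SetTheory.PGame

instance isEmpty_zero_leftMoves : IsEmpty (LeftMoves 0) := ⟨PEmpty.elim⟩
instance isEmpty_zero_rightMoves : IsEmpty (RightMoves 0) := ⟨PEmpty.elim⟩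
instance isEmpty_one_rightMoves : IsEmpty (RightMoves 1) := ⟨PEmpty.elim⟩

def LF' (x y : PGame.{u}) : Prop := (leLF x y).2

theorem pg_le_def' {x y : PGame.{u}} :
    x ≤ y ↔ (∀ i, LF' (x.moveLeft i) y) ∧ ∀ j, LF' x (y.moveRight j) := by
  cases x; cases y; exact Iff.rfl

theorem pg_lf_def' {x y : PGame.{u}} :
    LF' x y ↔ (∃ i, x ≤ y.moveLeft i) ∨ ∃ j, x.moveRight j ≤ y := by
  cases x; cases y; exact Iff.rfl

theorem pg_not_le_lf' : ∀ x y : PGame.{u}, (¬ x ≤ y ↔ LF' y x) ∧ (¬ LF' x y ↔ y ≤ x) := by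
  intro x
  induction x with
  | mk xl xr xL xR IHxl IHxr =>
    intro y
    induction y with
    | mk yl yr yL yR IHyl IHyr =>
      rw [pg_le_def' (x := mk xl xr xL xR) (y := mk yl yr yL yR),
        pg_lf_def' (x := mk yl yr yL yR) (y := mk xl xr xL xR),
        pg_lf_def' (x := mk xl xr xL xR) (y := mk yl yr yL yR),
        pg_le_def' (x := mk yl yr yL yR) (y := mk xl xr xL xR)]
      constructor
      · rw [not_and_or, not_forall, not_forall]
        exact or_congr (exists_congr fun i => (IHxl i _).2) (exists_congr fun j => (IHyr j).2)
      · rw [not_or, not_exists, not_exists]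
        exact and_congr (forall_congr' fun i => (IHyl i).1) (forall_congr' fun j => (IHxr j _).1)

/-- `x ⧏ y` means `¬ y ≤ x`, as in former Mathlib. -/
def LF (x y : PGame.{u}) : Prop := ¬ y ≤ x

infix:50 " ⧏ " => PGame.LF

theorem not_le {x y : PGame.{u}} : ¬ x ≤ y ↔ y ⧏ x := Iff.rfl

theorem pg_not_lf {x y : PGame.{u}} : ¬ x ⧏ y ↔ y ≤ x := not_not

theorem pg_lf_iff_lf' {x y : PGame.{u}} : x ⧏ y ↔ LF' x y := (pg_not_le_lf' y x).1

theorem le_iff_forall_lf {x y : PGame.{u}} :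
    x ≤ y ↔ (∀ i, x.moveLeft i ⧏ y) ∧ ∀ j, x ⧏ y.moveRight j := by
  rw [pg_le_def']; simp only [pg_lf_iff_lf']

theorem pg_lf_def {x y : PGame.{u}} :
    x ⧏ y ↔ (∃ i, x ≤ y.moveLeft i) ∨ ∃ j, x.moveRight j ≤ y :=
  pg_lf_iff_lf'.trans pg_lf_def'

theorem pg_le_trans_aux {x y z : PGame.{u}}
    (h₁ : ∀ i, y ≤ z → z ≤ x.moveLeft i → y ≤ x.moveLeft i)
    (h₂ : ∀ j, z.moveRight j ≤ x → x ≤ y → z.moveRight j ≤ y) (hxy : x ≤ y) (hyz : y ≤ z) :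
    x ≤ z :=
  le_iff_forall_lf.2 ⟨fun i => PGame.not_le.1 fun h => pg_not_lf.2 (h₁ i hyz h) ((le_iff_forall_lf.1 hxy).1 i),
    fun j => PGame.not_le.1 fun h => pg_not_lf.2 (h₂ j h hxy) ((le_iff_forall_lf.1 hyz).2 j)⟩

theorem pg_le_trans_all : ∀ x y z : PGame.{u},
    (x ≤ y → y ≤ z → x ≤ z) ∧ (y ≤ z → z ≤ x → y ≤ x) ∧ (z ≤ x → x ≤ y → z ≤ y) := by
  intro x
  induction x with
  | mk xl xr xL xR IHxl IHxr =>
    intro y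
    induction y with
    | mk yl yr yL yR IHyl IHyr =>
      intro z
      induction z with
      | mk zl zr zL zR IHzl IHzr =>
        exact ⟨pg_le_trans_aux (fun i => (IHxl i _ _).2.1) (fun j => (IHzr j).2.2),
          pg_le_trans_aux (fun i => (IHyl i _).2.2) (fun j => (IHxr j _ _).1),
          pg_le_trans_aux (fun i => (IHzl i).1) (fun j => (IHyr j _).2.1)⟩

theorem pg_le_trans {x y z : PGame.{u}} (h₁ : x ≤ y) (h₂ : y ≤ z) : x ≤ z :=
  (pg_le_trans_all x y z).1 h₁ h₂

theorem lf_of_le_of_lf {x y z : PGame.{u}} (h₁ : x ≤ y) (h₂ : y ⧏ z) : x ⧏ z :=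
  PGame.not_le.1 fun h => PGame.not_le.2 h₂ (pg_le_trans h h₁)

theorem zero_lf_one : (0 : PGame.{u}) ⧏ 1 :=
  pg_lf_def.2 (Or.inl ⟨PUnit.unit, le_iff_forall_lf.2 ⟨fun i => PEmpty.elim i, fun j => PEmpty.elim j⟩⟩)

theorem le_zero_of_isEmpty_leftMoves (x : PGame.{u}) [IsEmpty x.LeftMoves] : x ≤ 0 :=
  le_iff_forall_lf.2 ⟨fun i => isEmptyElim i, fun j => PEmpty.elim j⟩

theorem lf_of_moveRight_le {x y : PGame.{u}} {j : x.RightMoves} (h : x.moveRight j ≤ y) : x ⧏ y :=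
  pg_lf_def.2 (Or.inr ⟨j, h⟩)

theorem lt_iff_le_and_lf {x y : PGame.{u}} : x < y ↔ x ≤ y ∧ x ⧏ y := Iff.rfl

theorem pg_neg_neg : ∀ x : PGame.{u}, - -x = x := by
  intro x
  induction x with
  | mk l r L R IHl IHr =>
    show PGame.mk l r (fun i => - -L i) (fun j => - -R j) = _
    rw [funext IHl, funext IHr]

theorem pg_neg_le_neg_aux : ∀ x y : PGame.{u}, (-x ≤ -y ↔ y ≤ x) ∧ (-y ≤ -x ↔ x ≤ y) := by
  intro x
  induction x with
  | mk xl xr xL xR IHxl IHxr =>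
    intro y
    induction y with
    | mk yl yr yL yR IHyl IHyr =>
      constructor
      · rw [le_iff_forall_lf (x := -mk xl xr xL xR) (y := -mk yl yr yL yR),
          le_iff_forall_lf (x := mk yl yr yL yR) (y := mk xl xr xL xR)]
        refine and_comm.trans (and_congr ?_ ?_)
        · exact forall_congr' fun j => not_congr (IHyl j).2
        · exact forall_congr' fun i => not_congr (IHxr i _).2
      · rw [le_iff_forall_lf (x := -mk yl yr yL yR) (y := -mk xl xr xL xR),
          le_iff_forall_lf (x := mk xl xr xL xR) (y := mk yl yr yL yR)]
        refine and_comm.trans (and_congr ?_ ?_)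
        · exact forall_congr' fun j => not_congr (IHxl j _).1
        · exact forall_congr' fun i => not_congr (IHyr i).1

theorem neg_lt_iff {x y : PGame.{u}} : -x < y ↔ -y < x := by
  have h1 : ∀ a b : PGame.{u}, -a ≤ b ↔ -b ≤ a := fun a b => by
    have := (pg_neg_le_neg_aux a (-b)).1; rwa [pg_neg_neg] at this
  have h2 : ∀ a b : PGame.{u}, b ≤ -a ↔ a ≤ -b := fun a b => by
    have := (pg_neg_le_neg_aux (-b) a).1; rwa [pg_neg_neg] at this
  show (-x ≤ y ∧ ¬ y ≤ -x) ↔ (-y ≤ x ∧ ¬ x ≤ -y)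
  rw [h1 x y, h2 x y]

/-- Pre-games ordered by the transitive closure of the option relation. -/
def PGameT : Type (u + 1) := PGame.{u}

def toT (x : PGame.{u}) : PGameT.{u} := x

instance : WellFoundedRelation PGameT.{u} := ⟨Relation.TransGen IsOption', isOption'_wf.transGen⟩

end SetTheory.PGame


theorem dicotic_zero : Dicotic 0 := by
  rw [Dicotic]
  refine ⟨Or.inl ⟨?_, ?_⟩, ?_, ?_⟩ <;> first | infer_instance | exact fun i => i.elim

theorem dicotic_neg : ∀ (x : PGame), Dicotic x → Dicotic (-x)
  | PGame.mk l r L R, hx => by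
    rw [Dicotic] at hx ⊢
    obtain ⟨h1, h2, h3⟩ := hx
    refine ⟨?_, fun j => dicotic_neg _ (h3 j), fun i => dicotic_neg _ (h2 i)⟩
    rcases h1 with ⟨he1, he2⟩ | ⟨hn1, hn2⟩
    · exact Or.inl ⟨he2, he1⟩
    · exact Or.inr ⟨hn2, hn1⟩
termination_by x => x
decreasing_by
  all_goals first
    | exact isOption'_moveLeft _ _
    | exact isOption'_moveRight _ _

theorem dicotic_add : ∀ (x y : PGame), Dicotic x → Dicotic y → Dicotic (x + y)
  | PGame.mk xl xr xL xR, PGame.mk yl yr yL yR, hx, hy => by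
    have hx' := hx; have hy' := hy
    rw [Dicotic] at hx' hy' ⊢
    obtain ⟨hx1, hx2, hx3⟩ := hx'
    obtain ⟨hy1, hy2, hy3⟩ := hy' 
    refine ⟨?_, ?_, ?_⟩
    · rcases hx1 with ⟨hxe1, hxe2⟩ | ⟨hxn1, hxn2⟩
      · rcases hy1 with ⟨hye1, hye2⟩ | ⟨hyn1, hyn2⟩
        · exact Or.inl ⟨isEmpty_sum.2 ⟨hxe1, hye1⟩, isEmpty_sum.2 ⟨hxe2, hye2⟩⟩
        · exact Or.inr ⟨⟨Sum.inr hyn1.some⟩, ⟨Sum.inr hyn2.some⟩⟩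
      · exact Or.inr ⟨⟨Sum.inl hxn1.some⟩, ⟨Sum.inl hxn2.some⟩⟩
    · rintro (i | i)
      · exact dicotic_add _ _ (hx2 i) hy
      · exact dicotic_add _ _ hx (hy2 i)
    · rintro (j | j)
      · exact dicotic_add _ _ (hx3 j) hy
      · exact dicotic_add _ _ hx (hy3 j)
termination_by x y => (x, y)
decreasing_by
  all_goals first
    | exact Prod.Lex.left _ _ (isOption'_moveLeft (PGame.mk _ _ _ _) _)
    | exact Prod.Lex.left _ _ (isOption'_moveRight (PGame.mk _ _ _ _) _)
    | exact Prod.Lex.right _ (isOption'_moveLeft (PGame.mk _ _ _ _) _)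
    | exact Prod.Lex.right _ (isOption'_moveRight (PGame.mk _ _ _ _) _)

theorem dicotic_le_one : ∀ (x : PGame), Dicotic x → x ≤ 1
  | x, hx => by
    rw [Dicotic] at hx
    obtain ⟨_, h2, _⟩ := hx
    refine le_iff_forall_lf.2 ⟨fun i => ?_, fun j => j.elim⟩
    have hi := h2 i
    rw [Dicotic] at hi
    obtain ⟨hi1, _, hi3⟩ := hi
    rcases hi1 with ⟨hie, _⟩ | ⟨_, hin⟩
    · have : x.moveLeft i ≤ 0 := @PGame.le_zero_of_isEmpty_leftMoves _ hie
      exact PGame.lf_of_le_of_lf this PGame.zero_lf_one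
    · exact PGame.lf_of_moveRight_le (dicotic_le_one _ (hi3 hin.some))
termination_by x => toT x
decreasing_by
  exact Relation.TransGen.head (isOption'_moveRight _ _) (Relation.TransGen.single (isOption'_moveLeft _ _))

theorem dicotic_lf_one (x : PGame) (hx : Dicotic x) : x ⧏ 1 := by
  rw [Dicotic] at hx
  obtain ⟨h1, _, h3⟩ := hx
  rcases h1 with ⟨hle, hre⟩ | ⟨_, hn⟩
  · have : x ≤ 0 := @PGame.le_zero_of_isEmpty_leftMoves _ hle
    exact PGame.lf_of_le_of_lf this PGame.zero_lf_one
  · rw [← PGame.not_le]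
    intro h
    exact PGame.not_le.1 ((PGame.le_iff_forall_lf.1 h).2 hn.some)
      (dicotic_le_one _ (h3 hn.some))

theorem dicotic_lt_one (x : PGame) (hx : Dicotic x) : x < 1 :=
  PGame.lt_iff_le_and_lf.2 ⟨dicotic_le_one x hx, dicotic_lf_one x hx⟩

theorem dicotic_copies (G : PGame) (hG : Dicotic G) : ∀ n, Dicotic (copies n G)
  | 0 => dicotic_zero
  | n + 1 => dicotic_add _ _ (dicotic_copies G hG n) hG

theorem stmt5 : ∀ G : PGame, Dicotic G →
    ∀ n : ℕ, 0 < n → copies n G < 1 ∧ -1 < copies n G := by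
  intro G hG n _
  have h := dicotic_copies G hG n
  refine ⟨dicotic_lt_one _ h, ?_⟩
  rw [PGame.neg_lt_iff]
  exact dicotic_lt_one _ (dicotic_neg _ h)
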